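/- For every real ν ≥ 2 there exists a constant c(ν) > 0, depending only on ν, such that for all probability measures G and Ĝ on (0,∞) and all reals a > 0 and b > 0: ∫_{0 < t ≤ b} ( ∫_{|x| > a} |h_G(x, t) − h_Ĝ(x, t)| dx ) · f_G(t; ν) dt ≤ 2 · { c(ν)·(b/a)·( ∫_0^∞ (f_G(w; ν+1) − f_Ĝ(w; ν+1))² dw )^{1/2} + ∫_0^∞ |f_G(w; ν) − f_Ĝ(w; ν)| dw }, where the inequality is understood in [0, ∞]. -/

import Mathlib

open MeasureTheory Real
open scoped ENNReal

/-- `g_ν(t; σ²)`: the density of `(σ²/ν)·χ²_ν`, i.e. the Gamma(ν/2, rate ν/(2σ²)) density. -/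
noncomputable def gdens (ν σ2 t : ℝ) : ℝ :=
  (1 / Real.Gamma (ν / 2)) * (ν / (2 * σ2)) ^ (ν / 2) * t ^ (ν / 2 - 1) *
    Real.exp (-(ν * t) / (2 * σ2))

/-- `φ(x; σ²) = (2πσ²)^{−1/2}·exp(−x²/(2σ²))`: the `N(0, σ²)` density. -/
noncomputable def phidens (x σ2 : ℝ) : ℝ :=
  (2 * Real.pi * σ2) ^ (-(1 / 2) : ℝ) * Real.exp (-(x ^ 2) / (2 * σ2))

/-- `f_G(t; ν) = ∫ g_ν(t; σ²) dG(σ²)`: the marginal density of `S²`. -/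
noncomputable def fGdens (G : Measure ℝ) (ν t : ℝ) : ℝ :=
  ∫ σ2, gdens ν σ2 t ∂G

/-- `h_G(x, t)`: the conditional null density of `X` given `μ = 0, S² = t`. -/
noncomputable def hGdens (G : Measure ℝ) (ν x t : ℝ) : ℝ :=
  (∫ σ2, phidens x σ2 * gdens ν σ2 t ∂G) / fGdens G ν t

lemma rpow_mul_exp_le {p y : ℝ} (hp : 0 < p) (hy : 0 < y) :
    y ^ p * Real.exp (-y) ≤ p ^ p * Real.exp (-p) := by
  have h1 : Real.log y ≤ Real.log p + (y / p - 1) := by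
    have := Real.log_le_sub_one_of_pos (show 0 < y / p by positivity)
    rw [Real.log_div (ne_of_gt hy) (ne_of_gt hp)] at this
    linarith
  have h2 : p * Real.log y - y ≤ p * Real.log p - p := by
    have := mul_le_mul_of_nonneg_left h1 hp.le
    have hpy : p * (y / p) = y := by field_simp
    nlinarith [this]
  calc y ^ p * Real.exp (-y) = Real.exp (p * Real.log y - y) := by
        rw [← Real.log_rpow hy, Real.exp_sub, Real.exp_log (Real.rpow_pos_of_pos hy p)]
        rw [Real.exp_neg]; ring
    _ ≤ Real.exp (p * Real.log p - p) := Real.exp_le_exp.mpr h2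
    _ = p ^ p * Real.exp (-p) := by
        rw [← Real.log_rpow hp, Real.exp_sub, Real.exp_log (Real.rpow_pos_of_pos hp p)]
        rw [Real.exp_neg]; ring

lemma gdens_pos {ν σ2 t : ℝ} (hν : 0 < ν) (hσ : 0 < σ2) (ht : 0 < t) : 0 < gdens ν σ2 t := by
  unfold gdens
  have h1 : 0 < Real.Gamma (ν / 2) := Real.Gamma_pos_of_pos (by linarith)
  have h2 : 0 < ν / (2 * σ2) := by positivity
  positivity

lemma gdens_nonneg {ν σ2 t : ℝ} (hν : 0 < ν) (hσ : 0 < σ2) (ht : 0 < t) : 0 ≤ gdens ν σ2 t :=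
  (gdens_pos hν hσ ht).le

lemma phidens_nonneg {x σ2 : ℝ} (hσ : 0 < σ2) : 0 ≤ phidens x σ2 := by
  unfold phidens
  have hπ := Real.pi_pos
  positivity

lemma gdens_le {ν t : ℝ} (hν : 0 < ν) (ht : 0 < t) {σ2 : ℝ} (hσ : 0 < σ2) :
    gdens ν σ2 t ≤ (1 / Real.Gamma (ν / 2)) * ((ν/2) ^ (ν/2) * Real.exp (-(ν/2))) / t := by
  have hΓ : 0 < Real.Gamma (ν / 2) := Real.Gamma_pos_of_pos (by linarith)
  have hy : 0 < ν * t / (2 * σ2) := by positivity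
  have key : (ν * t / (2 * σ2)) ^ (ν/2) * Real.exp (-(ν * t / (2 * σ2)))
      ≤ (ν/2) ^ (ν/2) * Real.exp (-(ν/2)) := rpow_mul_exp_le (by positivity) hy
  have h1 : gdens ν σ2 t
      = (1 / Real.Gamma (ν / 2)) * ((ν * t / (2 * σ2)) ^ (ν/2) * Real.exp (-(ν * t / (2 * σ2)))) / t := by
    unfold gdens
    have : (ν * t / (2 * σ2)) ^ (ν/2) = (ν / (2 * σ2)) ^ (ν/2) * t ^ (ν/2) := by
      rw [show ν * t / (2 * σ2) = (ν / (2 * σ2)) * t by ring,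
        Real.mul_rpow (by positivity) ht.le]
    rw [this]
    have h2 : t ^ (ν/2 - 1) = t ^ (ν/2) / t := by
      rw [Real.rpow_sub ht, Real.rpow_one]
    rw [h2, show -(ν * t) / (2 * σ2) = -(ν * t / (2 * σ2)) by ring]
    ring
  rw [h1]
  have hΓ' : (0:ℝ) ≤ 1 / Real.Gamma (ν / 2) := by positivity
  gcongr

noncomputable def kpp (ν x t : ℝ) : ℝ :=
  (Real.Gamma ((ν+1)/2) / Real.Gamma (ν/2)) * Real.pi ^ (-(1/2) : ℝ) * ν ^ (ν/2) *
    (ν+1) ^ (-((ν+1)/2)) * t ^ (ν/2 - 1) * ((ν*t+x^2)/(ν+1)) ^ (-((ν-1)/2))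

lemma phig_eq {ν σ2 t : ℝ} (x : ℝ) (hν : 0 < ν) (hσ : 0 < σ2) (ht : 0 < t) :
    phidens x σ2 * gdens ν σ2 t = kpp ν x t * gdens (ν+1) σ2 ((ν*t+x^2)/(ν+1)) := by
  have hπ := Real.pi_pos
  have h2σ : (0:ℝ) < 2*σ2 := by linarith
  have hν1 : (0:ℝ) < ν+1 := by linarith
  have hΓ : 0 < Real.Gamma (ν/2) := Real.Gamma_pos_of_pos (by linarith)
  have hΓ1 : 0 < Real.Gamma ((ν+1)/2) := Real.Gamma_pos_of_pos (by linarith)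
  set w : ℝ := (ν*t+x^2)/(ν+1) with hwdef
  have hw : 0 < w := by positivity
  have hw1 : (ν+1) * w = ν*t + x^2 := by rw [hwdef]; field_simp
  have e1 : (2*Real.pi*σ2) ^ (-(1/2) : ℝ)
      = Real.pi ^ (-(1/2) : ℝ) * (2*σ2) ^ (-(1/2) : ℝ) := by
    rw [show 2*Real.pi*σ2 = Real.pi*(2*σ2) by ring, Real.mul_rpow hπ.le h2σ.le]
  have e2 : (ν/(2*σ2)) ^ (ν/2) = ν ^ (ν/2) * (2*σ2) ^ (-(ν/2)) := by
    rw [Real.div_rpow hν.le h2σ.le, Real.rpow_neg h2σ.le, div_eq_mul_inv]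
  have e3 : ((ν+1)/(2*σ2)) ^ ((ν+1)/2) = (ν+1) ^ ((ν+1)/2) * (2*σ2) ^ (-((ν+1)/2)) := by
    rw [Real.div_rpow hν1.le h2σ.le, Real.rpow_neg h2σ.le, div_eq_mul_inv]
  have e4 : (2*σ2) ^ (-(1/2) : ℝ) * (2*σ2) ^ (-(ν/2)) = (2*σ2) ^ (-((ν+1)/2)) := by
    rw [← Real.rpow_add h2σ]; congr 1; ring
  have e5 : w ^ (-((ν-1)/2)) * w ^ ((ν+1)/2 - 1) = 1 := by
    rw [← Real.rpow_add hw, show -((ν-1)/2) + ((ν+1)/2 - 1) = 0 by ring, Real.rpow_zero]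
  have e6 : ((ν+1) : ℝ) ^ (-((ν+1)/2)) * (ν+1) ^ ((ν+1)/2) = 1 := by
    rw [← Real.rpow_add hν1, show -((ν+1)/2) + (ν+1)/2 = 0 by ring, Real.rpow_zero]
  have e7 : Real.Gamma ((ν+1)/2) / Real.Gamma (ν/2) * (1/Real.Gamma ((ν+1)/2))
      = 1 / Real.Gamma (ν/2) := by field_simp
  have expL : Real.exp (-(x^2)/(2*σ2)) * Real.exp (-(ν*t)/(2*σ2))
      = Real.exp (-(ν*t+x^2)/(2*σ2)) := by
    rw [← Real.exp_add]; congr 1; ring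
  have expR : Real.exp (-((ν+1)*w)/(2*σ2)) = Real.exp (-(ν*t+x^2)/(2*σ2)) := by
    rw [hw1]
  calc phidens x σ2 * gdens ν σ2 t
      = (1/Real.Gamma (ν/2)) * Real.pi ^ (-(1/2) : ℝ) * ν ^ (ν/2) *
        ((2*σ2) ^ (-(1/2) : ℝ) * (2*σ2) ^ (-(ν/2))) * t ^ (ν/2 - 1) *
        (Real.exp (-(x^2)/(2*σ2)) * Real.exp (-(ν*t)/(2*σ2))) := by
        unfold phidens gdens; rw [e1, e2]; ring
    _ = (1/Real.Gamma (ν/2)) * Real.pi ^ (-(1/2) : ℝ) * ν ^ (ν/2) *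
        (2*σ2) ^ (-((ν+1)/2)) * t ^ (ν/2 - 1) * Real.exp (-(ν*t+x^2)/(2*σ2)) := by
        rw [e4, expL]
    _ = (Real.Gamma ((ν+1)/2) / Real.Gamma (ν/2) * (1/Real.Gamma ((ν+1)/2))) *
        Real.pi ^ (-(1/2) : ℝ) * ν ^ (ν/2) *
        (((ν+1):ℝ) ^ (-((ν+1)/2)) * (ν+1) ^ ((ν+1)/2)) *
        (w ^ (-((ν-1)/2)) * w ^ ((ν+1)/2 - 1)) *
        (2*σ2) ^ (-((ν+1)/2)) * t ^ (ν/2 - 1) * Real.exp (-(ν*t+x^2)/(2*σ2)) := by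
        rw [e5, e6, e7]; ring
    _ = kpp ν x t * gdens (ν+1) σ2 w := by
        unfold kpp gdens; rw [e3, expR, ← hwdef]; ring

lemma measurable_gdens (ν : ℝ) : Measurable fun p : ℝ × ℝ => gdens ν p.1 p.2 := by
  unfold gdens; fun_prop

lemma measurable_phidens : Measurable fun p : ℝ × ℝ => phidens p.1 p.2 := by
  unfold phidens; fun_prop

lemma phidens_eq (σ2 : ℝ) : (fun x => phidens x σ2)
    = fun x => (2 * Real.pi * σ2) ^ (-(1 / 2) : ℝ) * Real.exp (-(2*σ2)⁻¹ * x ^ 2) := by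
  funext x
  unfold phidens
  congr 1
  rw [neg_mul, neg_div]
  congr 1
  rw [inv_mul_eq_div]

lemma integrable_phidens {σ2 : ℝ} (hσ : 0 < σ2) : Integrable (fun x => phidens x σ2) := by
  rw [phidens_eq]
  have h : (0:ℝ) < (2*σ2)⁻¹ := by positivity
  exact (integrable_exp_neg_mul_sq h).const_mul _

lemma integral_phidens {σ2 : ℝ} (hσ : 0 < σ2) : ∫ x, phidens x σ2 = 1 := by
  have hπ := Real.pi_pos
  have h : (0:ℝ) < (2*σ2)⁻¹ := by positivity
  have h2 : (0:ℝ) < 2 * Real.pi * σ2 := by positivity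
  rw [phidens_eq, MeasureTheory.integral_const_mul, integral_gaussian]
  have e : Real.pi / (2*σ2)⁻¹ = 2 * Real.pi * σ2 := by field_simp
  rw [e, Real.sqrt_eq_rpow, ← Real.rpow_add h2]
  norm_num

noncomputable def kconst (ν : ℝ) : ℝ :=
  (Real.Gamma ((ν+1)/2) / Real.Gamma (ν/2)) * Real.pi ^ (-(1/2) : ℝ) * ν ^ (ν/2) *
    (ν+1) ^ (-((ν+1)/2)) * ((ν+1)/ν) ^ (ν/2 - 1)

lemma kconst_pos {ν : ℝ} (hν : 0 < ν) : 0 < kconst ν := by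
  have hπ := Real.pi_pos
  have hΓ : 0 < Real.Gamma (ν/2) := Real.Gamma_pos_of_pos (by linarith)
  have hΓ1 : 0 < Real.Gamma ((ν+1)/2) := Real.Gamma_pos_of_pos (by linarith)
  have hν1 : (0:ℝ) < ν+1 := by linarith
  unfold kconst
  positivity

lemma kpp_nonneg {ν x t : ℝ} (hν : 0 < ν) (ht : 0 < t) : 0 ≤ kpp ν x t := by
  have hπ := Real.pi_pos
  have hΓ : 0 < Real.Gamma (ν/2) := Real.Gamma_pos_of_pos (by linarith)
  have hΓ1 : 0 < Real.Gamma ((ν+1)/2) := Real.Gamma_pos_of_pos (by linarith)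
  have hν1 : (0:ℝ) < ν+1 := by linarith
  have hw : (0:ℝ) < (ν*t+x^2)/(ν+1) := by positivity
  unfold kpp
  positivity

lemma kpp_le {ν t : ℝ} (x : ℝ) (hν : 2 ≤ ν) (ht : 0 < t) :
    kpp ν x t ≤ kconst ν * ((ν*t+x^2)/(ν+1)) ^ (-(1/2) : ℝ) := by
  have hν0 : (0:ℝ) < ν := by linarith
  have hπ := Real.pi_pos
  have hΓ : 0 < Real.Gamma (ν/2) := Real.Gamma_pos_of_pos (by linarith)
  have hΓ1 : 0 < Real.Gamma ((ν+1)/2) := Real.Gamma_pos_of_pos (by linarith)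
  have hν1 : (0:ℝ) < ν+1 := by linarith
  set w : ℝ := (ν*t+x^2)/(ν+1) with hwdef
  have hw : 0 < w := by positivity
  have htw : t ≤ (ν+1)/ν * w := by
    rw [hwdef]
    rw [div_mul_div_comm, le_div_iff₀ (by positivity)]
    nlinarith [sq_nonneg x]
  have hexp : (0:ℝ) ≤ ν/2 - 1 := by linarith
  have h1 : t ^ (ν/2 - 1) ≤ ((ν+1)/ν) ^ (ν/2 - 1) * w ^ (ν/2 - 1) := by
    rw [← Real.mul_rpow (by positivity) hw.le]
    exact Real.rpow_le_rpow ht.le htw hexp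
  have h2 : w ^ (ν/2 - 1) * w ^ (-((ν-1)/2)) = w ^ (-(1/2) : ℝ) := by
    rw [← Real.rpow_add hw]; congr 1; ring
  have hC : (0:ℝ) ≤ (Real.Gamma ((ν+1)/2) / Real.Gamma (ν/2)) * Real.pi ^ (-(1/2) : ℝ) *
      ν ^ (ν/2) * (ν+1) ^ (-((ν+1)/2)) := by positivity
  calc kpp ν x t
      = ((Real.Gamma ((ν+1)/2) / Real.Gamma (ν/2)) * Real.pi ^ (-(1/2) : ℝ) * ν ^ (ν/2) *
          (ν+1) ^ (-((ν+1)/2))) * (t ^ (ν/2 - 1) * w ^ (-((ν-1)/2))) := by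
        unfold kpp; rw [← hwdef]; ring
    _ ≤ ((Real.Gamma ((ν+1)/2) / Real.Gamma (ν/2)) * Real.pi ^ (-(1/2) : ℝ) * ν ^ (ν/2) *
          (ν+1) ^ (-((ν+1)/2))) * ((((ν+1)/ν) ^ (ν/2 - 1) * w ^ (ν/2 - 1)) * w ^ (-((ν-1)/2))) := by
        apply mul_le_mul_of_nonneg_left _ hC
        apply mul_le_mul_of_nonneg_right h1 (Real.rpow_nonneg hw.le _)
    _ = kconst ν * w ^ (-(1/2) : ℝ) := by
        rw [mul_assoc (((ν+1)/ν) ^ (ν/2 - 1)), h2]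
        unfold kconst; ring

lemma measurable_fG (G : Measure ℝ) [SFinite G] (ν : ℝ) :
    Measurable fun t => fGdens G ν t := by
  have h : StronglyMeasurable fun p : ℝ × ℝ => gdens ν p.2 p.1 := by
    apply Measurable.stronglyMeasurable; unfold gdens; fun_prop
  exact (MeasureTheory.StronglyMeasurable.integral_prod_right' h).measurable

lemma measurable_num (G : Measure ℝ) [SFinite G] (ν t : ℝ) :
    Measurable fun x => ∫ σ2, phidens x σ2 * gdens ν σ2 t ∂G := by
  have h : StronglyMeasurable fun p : ℝ × ℝ => phidens p.1 p.2 * gdens ν p.2 t := by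
    apply Measurable.stronglyMeasurable; unfold gdens phidens; fun_prop
  exact (MeasureTheory.StronglyMeasurable.integral_prod_right' h).measurable

lemma integrable_gdens {G : Measure ℝ} [IsProbabilityMeasure G]
    (hG : ∀ᵐ σ2 ∂G, 0 < σ2) {ν t : ℝ} (hν : 0 < ν) (ht : 0 < t) :
    Integrable (fun σ2 => gdens ν σ2 t) G := by
  have hm : AEStronglyMeasurable (fun σ2 => gdens ν σ2 t) G := by
    apply Measurable.aestronglyMeasurable; unfold gdens; fun_prop
  refine Integrable.mono' (integrable_const
    ((1 / Real.Gamma (ν / 2)) * ((ν/2) ^ (ν/2) * Real.exp (-(ν/2))) / t)) hm ?_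
  filter_upwards [hG] with σ2 hσ
  rw [Real.norm_eq_abs, abs_of_nonneg (gdens_nonneg hν hσ ht)]
  exact gdens_le hν ht hσ

lemma fGdens_pos {G : Measure ℝ} [IsProbabilityMeasure G]
    (hG : ∀ᵐ σ2 ∂G, 0 < σ2) {ν t : ℝ} (hν : 0 < ν) (ht : 0 < t) :
    0 < fGdens G ν t := by
  rw [fGdens, integral_pos_iff_support_of_nonneg_ae]
  · have h1 : G (Set.Ioi 0) = 1 := by
      have h2 : G (Set.Ioi (0:ℝ))ᶜ = 0 := by
        rw [ae_iff] at hG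
        simp only [not_lt] at hG; rw [Set.compl_Ioi]; exact hG
      have := measure_add_measure_compl (μ := G) (measurableSet_Ioi (a := (0:ℝ)))
      rw [h2, add_zero] at this
      simpa using this
    have hsub : Set.Ioi (0:ℝ) ⊆ Function.support fun σ2 => gdens ν σ2 t :=
      fun σ2 hσ => ne_of_gt (gdens_pos hν hσ ht)
    calc (0:ℝ≥0∞) < 1 := by norm_num
      _ = G (Set.Ioi 0) := h1.symm
      _ ≤ G (Function.support fun σ2 => gdens ν σ2 t) := measure_mono hsub
  · filter_upwards [hG] with σ2 hσ using gdens_nonneg hν hσ ht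
  · exact integrable_gdens hG hν ht

lemma ofReal_fG {G : Measure ℝ} [IsProbabilityMeasure G]
    (hG : ∀ᵐ σ2 ∂G, 0 < σ2) {ν t : ℝ} (hν : 0 < ν) (ht : 0 < t) :
    ENNReal.ofReal (fGdens G ν t) = ∫⁻ σ2, ENNReal.ofReal (gdens ν σ2 t) ∂G := by
  rw [fGdens]
  exact MeasureTheory.ofReal_integral_eq_lintegral_ofReal (integrable_gdens hG hν ht)
    (by filter_upwards [hG] with σ2 hσ using gdens_nonneg hν hσ ht)

lemma integrable_phig {G : Measure ℝ} [IsProbabilityMeasure G]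
    (hG : ∀ᵐ σ2 ∂G, 0 < σ2) {ν t : ℝ} (x : ℝ) (hν : 0 < ν) (ht : 0 < t) :
    Integrable (fun σ2 => phidens x σ2 * gdens ν σ2 t) G := by
  have hw : 0 < (ν*t+x^2)/(ν+1) := by positivity
  have h1 : Integrable (fun σ2 => kpp ν x t * gdens (ν+1) σ2 ((ν*t+x^2)/(ν+1))) G :=
    (integrable_gdens hG (by linarith) hw).const_mul _
  refine h1.congr ?_
  filter_upwards [hG] with σ2 hσ using (phig_eq x hν hσ ht).symm

lemma num_eq {G : Measure ℝ} [IsProbabilityMeasure G]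
    (hG : ∀ᵐ σ2 ∂G, 0 < σ2) {ν t : ℝ} (x : ℝ) (hν : 0 < ν) (ht : 0 < t) :
    (∫ σ2, phidens x σ2 * gdens ν σ2 t ∂G)
      = kpp ν x t * fGdens G (ν+1) ((ν*t+x^2)/(ν+1)) := by
  rw [show (∫ σ2, phidens x σ2 * gdens ν σ2 t ∂G)
      = ∫ σ2, kpp ν x t * gdens (ν+1) σ2 ((ν*t+x^2)/(ν+1)) ∂G from
    integral_congr_ae (by filter_upwards [hG] with σ2 hσ using phig_eq x hν hσ ht)]
  rw [MeasureTheory.integral_const_mul, fGdens]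

lemma num_nonneg {G : Measure ℝ} [IsProbabilityMeasure G]
    (hG : ∀ᵐ σ2 ∂G, 0 < σ2) {ν t : ℝ} (x : ℝ) (hν : 0 < ν) (ht : 0 < t) :
    0 ≤ ∫ σ2, phidens x σ2 * gdens ν σ2 t ∂G := by
  apply integral_nonneg_of_ae
  filter_upwards [hG] with σ2 hσ
  exact mul_nonneg (phidens_nonneg hσ) (gdens_nonneg hν hσ ht)

lemma lint_num {G : Measure ℝ} [IsProbabilityMeasure G]
    (hG : ∀ᵐ σ2 ∂G, 0 < σ2) {ν t : ℝ} (hν : 0 < ν) (ht : 0 < t) :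
    ∫⁻ x, ENNReal.ofReal (∫ σ2, phidens x σ2 * gdens ν σ2 t ∂G)
      = ENNReal.ofReal (fGdens G ν t) := by
  have e1 : ∀ x : ℝ, ENNReal.ofReal (∫ σ2, phidens x σ2 * gdens ν σ2 t ∂G)
      = ∫⁻ σ2, ENNReal.ofReal (phidens x σ2 * gdens ν σ2 t) ∂G := fun x =>
    MeasureTheory.ofReal_integral_eq_lintegral_ofReal (integrable_phig hG x hν ht)
      (by filter_upwards [hG] with σ2 hσ using
        mul_nonneg (phidens_nonneg hσ) (gdens_nonneg hν hσ ht))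
  simp_rw [e1]
  rw [lintegral_lintegral_swap]
  · have e2 : ∀ᵐ σ2 ∂G, (∫⁻ x, ENNReal.ofReal (phidens x σ2 * gdens ν σ2 t))
        = ENNReal.ofReal (gdens ν σ2 t) := by
      filter_upwards [hG] with σ2 hσ
      have e3 : ∀ x : ℝ, ENNReal.ofReal (phidens x σ2 * gdens ν σ2 t)
          = ENNReal.ofReal (phidens x σ2) * ENNReal.ofReal (gdens ν σ2 t) := fun x =>
        ENNReal.ofReal_mul (phidens_nonneg hσ)
      simp_rw [e3]
      rw [lintegral_mul_const' _ _ ENNReal.ofReal_ne_top,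
        ← MeasureTheory.ofReal_integral_eq_lintegral_ofReal (integrable_phidens hσ)
          (Filter.Eventually.of_forall fun x => phidens_nonneg hσ),
        integral_phidens hσ]
      simp
    rw [lintegral_congr_ae e2, ← ofReal_fG hG hν ht]
  · apply Measurable.aemeasurable
    apply Measurable.ennreal_ofReal
    unfold phidens gdens
    fun_prop

lemma lintegral_comp_affine {c d : ℝ} (hc : 0 < c) (F : ℝ → ℝ≥0∞) (hF : Measurable F)
    {s : Set ℝ} (hs : MeasurableSet s) :
    ∫⁻ t in (fun t => c*t+d) ⁻¹' s, F (c*t+d) = ENNReal.ofReal c⁻¹ * ∫⁻ w in s, F w := by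
  have hφ : Measurable fun t : ℝ => c*t+d := by fun_prop
  have hmap : Measure.map (fun t : ℝ => c*t+d) volume
      = ENNReal.ofReal c⁻¹ • (volume : Measure ℝ) := by
    have h1 : (fun t : ℝ => c*t+d) = (fun u : ℝ => u + d) ∘ (fun t : ℝ => c*t) := rfl
    rw [h1, ← Measure.map_map (measurable_add_const d) (measurable_const_mul c),
      Real.map_volume_mul_left (ne_of_gt hc), Measure.map_smul,
      map_add_right_eq_self (volume : Measure ℝ) d, abs_of_pos (inv_pos.mpr hc)]
  rw [← setLIntegral_map hs hF hφ, hmap]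
  rw [Measure.restrict_smul, lintegral_smul_measure, smul_eq_mul]

lemma sqrt_diff_le {u c : ℝ} (hu : 0 < u) (hc : 0 < c) :
    Real.sqrt u - Real.sqrt (max 0 (u - c)) ≤ c / Real.sqrt u := by
  have hsu : 0 < Real.sqrt u := Real.sqrt_pos.mpr hu
  have husq : Real.sqrt u * Real.sqrt u = u := Real.mul_self_sqrt hu.le
  rcases le_or_gt u c with h | h
  · have h0 : Real.sqrt (max 0 (u - c)) = 0 := by
      rw [max_eq_left (by linarith : u - c ≤ 0), Real.sqrt_zero]
    rw [h0, sub_zero, le_div_iff₀ hsu, husq]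
    exact h
  · have h0 : max 0 (u - c) = u - c := max_eq_right (by linarith)
    rw [h0, le_div_iff₀ hsu]
    have h1 : Real.sqrt (u-c) * Real.sqrt (u-c) = u - c := Real.mul_self_sqrt (by linarith)
    have h2 : Real.sqrt (u-c) ≤ Real.sqrt u := Real.sqrt_le_sqrt (by linarith)
    nlinarith [Real.sqrt_nonneg (u-c)]

lemma lint_Ioi_inv_sq {r : ℝ} (hr : 0 < r) {C : ℝ} (hC : 0 ≤ C) :
    ∫⁻ u in Set.Ioi r, ENNReal.ofReal (C * u ^ (-2 : ℝ)) = ENNReal.ofReal (C / r) := by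
  rw [← MeasureTheory.ofReal_integral_eq_lintegral_ofReal]
  · congr 1
    rw [MeasureTheory.integral_const_mul, integral_Ioi_rpow_of_lt (by norm_num) hr]
    norm_num
    rw [Real.rpow_neg_one]
    field_simp
  · exact (integrableOn_Ioi_rpow_of_lt (by norm_num) hr).const_mul C
  · refine (ae_restrict_iff' measurableSet_Ioi).mpr (Filter.Eventually.of_forall fun u hu => ?_)
    have hu0 : (0:ℝ) < u := lt_trans hr hu
    have := Real.rpow_nonneg hu0.le (-2 : ℝ)
    positivity

lemma stepA {G G' : Measure ℝ} [IsProbabilityMeasure G] [IsProbabilityMeasure G']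
    (hG : ∀ᵐ σ2 ∂G, 0 < σ2) (hG' : ∀ᵐ σ2 ∂G', 0 < σ2)
    {ν : ℝ} (hν : 2 ≤ ν) {a t : ℝ} (ht : 0 < t) :
    (∫⁻ x in {x : ℝ | a < |x|}, ENNReal.ofReal |hGdens G ν x t - hGdens G' ν x t|) *
        ENNReal.ofReal (fGdens G ν t)
      ≤ (∫⁻ x in {x : ℝ | a < |x|}, ENNReal.ofReal (kpp ν x t *
          |fGdens G (ν+1) ((ν*t+x^2)/(ν+1)) - fGdens G' (ν+1) ((ν*t+x^2)/(ν+1))|))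
        + ENNReal.ofReal |fGdens G ν t - fGdens G' ν t| := by
  have hν0 : (0:ℝ) < ν := by linarith
  have hf : 0 < fGdens G ν t := fGdens_pos hG hν0 ht
  have hf' : 0 < fGdens G' ν t := fGdens_pos hG' hν0 ht
  set E : Set ℝ := {x : ℝ | a < |x|} with hE
  -- the core pointwise real inequality
  have key : ∀ x : ℝ, |hGdens G ν x t - hGdens G' ν x t| * fGdens G ν t
      ≤ kpp ν x t * |fGdens G (ν+1) ((ν*t+x^2)/(ν+1)) - fGdens G' (ν+1) ((ν*t+x^2)/(ν+1))|
        + (∫ σ2, phidens x σ2 * gdens ν σ2 t ∂G') / fGdens G' ν t *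
            |fGdens G ν t - fGdens G' ν t| := by
    intro x
    set n : ℝ := ∫ σ2, phidens x σ2 * gdens ν σ2 t ∂G with hn
    set n' : ℝ := ∫ σ2, phidens x σ2 * gdens ν σ2 t ∂G' with hn'
    have hnn' : n - n' = kpp ν x t *
        (fGdens G (ν+1) ((ν*t+x^2)/(ν+1)) - fGdens G' (ν+1) ((ν*t+x^2)/(ν+1))) := by
      rw [hn, hn', num_eq hG x hν0 ht, num_eq hG' x hν0 ht]; ring
    have e : (n / fGdens G ν t - n' / fGdens G' ν t) * fGdens G ν t
        = (n - n') + (n' / fGdens G' ν t) * (fGdens G' ν t - fGdens G ν t) := by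
      field_simp
      ring
    have habs : |hGdens G ν x t - hGdens G' ν x t| * fGdens G ν t
        = |(n / fGdens G ν t - n' / fGdens G' ν t) * fGdens G ν t| := by
      rw [abs_mul, abs_of_pos hf]; rfl
    rw [habs, e]
    refine le_trans (abs_add_le _ _) ?_
    have h1 : |n - n'| = kpp ν x t *
        |fGdens G (ν+1) ((ν*t+x^2)/(ν+1)) - fGdens G' (ν+1) ((ν*t+x^2)/(ν+1))| := by
      rw [hnn', abs_mul, abs_of_nonneg (kpp_nonneg hν0 ht)]
    have h2 : |(n' / fGdens G' ν t) * (fGdens G' ν t - fGdens G ν t)|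
        = n' / fGdens G' ν t * |fGdens G ν t - fGdens G' ν t| := by
      rw [abs_mul, abs_of_nonneg (div_nonneg (num_nonneg hG' x hν0 ht) hf'.le), abs_sub_comm]
    rw [h1, h2]
  -- move the constant inside
  rw [← lintegral_mul_const' (ENNReal.ofReal (fGdens G ν t)) _ ENNReal.ofReal_ne_top]
  have hmeas1 : Measurable fun x => ENNReal.ofReal (kpp ν x t *
      |fGdens G (ν+1) ((ν*t+x^2)/(ν+1)) - fGdens G' (ν+1) ((ν*t+x^2)/(ν+1))|) := by
    apply Measurable.ennreal_ofReal
    apply Measurable.mul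
    · unfold kpp; fun_prop
    · apply Measurable.abs
      exact ((measurable_fG G (ν+1)).sub (measurable_fG G' (ν+1))).comp (by fun_prop)
  have hmeas2 : Measurable fun x : ℝ => ENNReal.ofReal
      ((∫ σ2, phidens x σ2 * gdens ν σ2 t ∂G') / fGdens G' ν t *
        |fGdens G ν t - fGdens G' ν t|) := by
    apply Measurable.ennreal_ofReal
    exact (((measurable_num G' ν t).div measurable_const).mul measurable_const)
  calc ∫⁻ x in E, ENNReal.ofReal |hGdens G ν x t - hGdens G' ν x t| *
          ENNReal.ofReal (fGdens G ν t)
      ≤ ∫⁻ x in E, (ENNReal.ofReal (kpp ν x t *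
          |fGdens G (ν+1) ((ν*t+x^2)/(ν+1)) - fGdens G' (ν+1) ((ν*t+x^2)/(ν+1))|)
        + ENNReal.ofReal ((∫ σ2, phidens x σ2 * gdens ν σ2 t ∂G') / fGdens G' ν t *
            |fGdens G ν t - fGdens G' ν t|)) := by
        refine setLIntegral_mono (hmeas1.add hmeas2) fun x _ => ?_
        rw [← ENNReal.ofReal_mul (abs_nonneg _)]
        exact le_trans (ENNReal.ofReal_le_ofReal (key x)) (ENNReal.ofReal_add_le)
    _ = (∫⁻ x in E, ENNReal.ofReal (kpp ν x t *
          |fGdens G (ν+1) ((ν*t+x^2)/(ν+1)) - fGdens G' (ν+1) ((ν*t+x^2)/(ν+1))|))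
        + ∫⁻ x in E, ENNReal.ofReal ((∫ σ2, phidens x σ2 * gdens ν σ2 t ∂G') / fGdens G' ν t *
            |fGdens G ν t - fGdens G' ν t|) :=
        lintegral_add_left' hmeas1.aemeasurable _
    _ ≤ (∫⁻ x in E, ENNReal.ofReal (kpp ν x t *
          |fGdens G (ν+1) ((ν*t+x^2)/(ν+1)) - fGdens G' (ν+1) ((ν*t+x^2)/(ν+1))|))
        + ENNReal.ofReal |fGdens G ν t - fGdens G' ν t| := by
        refine add_le_add le_rfl ?_
        have e4 : ∀ x : ℝ, ENNReal.ofReal ((∫ σ2, phidens x σ2 * gdens ν σ2 t ∂G') /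
            fGdens G' ν t * |fGdens G ν t - fGdens G' ν t|)
            = ENNReal.ofReal (∫ σ2, phidens x σ2 * gdens ν σ2 t ∂G') *
              ENNReal.ofReal (|fGdens G ν t - fGdens G' ν t| / fGdens G' ν t) := by
          intro x
          rw [← ENNReal.ofReal_mul (num_nonneg hG' x hν0 ht)]
          congr 1
          ring
        simp_rw [e4]
        rw [lintegral_mul_const' _ _ ENNReal.ofReal_ne_top]
        calc (∫⁻ x in E, ENNReal.ofReal (∫ σ2, phidens x σ2 * gdens ν σ2 t ∂G')) *
              ENNReal.ofReal (|fGdens G ν t - fGdens G' ν t| / fGdens G' ν t)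
            ≤ (∫⁻ x, ENNReal.ofReal (∫ σ2, phidens x σ2 * gdens ν σ2 t ∂G')) *
              ENNReal.ofReal (|fGdens G ν t - fGdens G' ν t| / fGdens G' ν t) :=
              mul_le_mul_left (setLIntegral_le_lintegral _ _) _
          _ = ENNReal.ofReal (fGdens G' ν t) *
              ENNReal.ofReal (|fGdens G ν t - fGdens G' ν t| / fGdens G' ν t) := by
              rw [lint_num hG' hν0 ht]
          _ = ENNReal.ofReal (fGdens G' ν t *
              (|fGdens G ν t - fGdens G' ν t| / fGdens G' ν t)) := by
              rw [ENNReal.ofReal_mul hf'.le]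
          _ = ENNReal.ofReal |fGdens G ν t - fGdens G' ν t| := by
              congr 1
              field_simp

set_option maxHeartbeats 2000000 in
lemma stepB (G G' : Measure ℝ) [SFinite G] [SFinite G'] {ν a b : ℝ}
    (hν : 2 ≤ ν) (ha : 0 < a) (hb : 0 < b) :
    (∫⁻ t in Set.Ioc (0:ℝ) b, ∫⁻ x in {x : ℝ | a < |x|}, ENNReal.ofReal (kpp ν x t *
        |fGdens G (ν+1) ((ν*t+x^2)/(ν+1)) - fGdens G' (ν+1) ((ν*t+x^2)/(ν+1))|))
      ≤ ENNReal.ofReal (2*(ν+1)*kconst ν * (b/a)) *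
        (∫⁻ w in Set.Ioi (0:ℝ),
          ENNReal.ofReal ((fGdens G (ν+1) w - fGdens G' (ν+1) w)^2)) ^ (1/2 : ℝ) := by
  have hν0 : (0:ℝ) < ν := by linarith
  have hν1 : (0:ℝ) < ν+1 := by linarith
  have hk : 0 < kconst ν := kconst_pos hν0
  set E : Set ℝ := {x : ℝ | a < |x|} with hEdef
  set Δ : ℝ → ℝ := fun u => fGdens G (ν+1) u - fGdens G' (ν+1) u with hΔdef
  have hmΔ : Measurable Δ := (measurable_fG G (ν+1)).sub (measurable_fG G' (ν+1))
  set Φ : ℝ → ℝ≥0∞ := fun u => ENNReal.ofReal (kconst ν * u ^ (-(1/2) : ℝ) * |Δ u|) with hΦdef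
  have hmΦ : Measurable Φ := by
    apply Measurable.ennreal_ofReal
    have m1 : Measurable fun u : ℝ => kconst ν * u ^ (-(1/2) : ℝ) := by fun_prop
    exact m1.mul hmΔ.abs
  have hmw : Measurable fun p : ℝ × ℝ => (ν*p.1+p.2^2)/(ν+1) := by fun_prop
  -- step 1 : bound kpp
  have step1 : (∫⁻ t in Set.Ioc (0:ℝ) b, ∫⁻ x in E, ENNReal.ofReal (kpp ν x t *
        |Δ ((ν*t+x^2)/(ν+1))|))
      ≤ ∫⁻ t in Set.Ioc (0:ℝ) b, ∫⁻ x in E, Φ ((ν*t+x^2)/(ν+1)) := by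
    refine setLIntegral_mono ?_ fun t ht => ?_
    · exact Measurable.lintegral_prod_right' (f := fun p : ℝ × ℝ => Φ ((ν*p.1+p.2^2)/(ν+1)))
        (hmΦ.comp hmw)
    · refine setLIntegral_mono (hmΦ.comp (show Measurable fun x : ℝ => (ν*t+x^2)/(ν+1) by fun_prop))
        fun x _ => ?_
      rw [hΦdef]
      exact ENNReal.ofReal_le_ofReal
        (mul_le_mul_of_nonneg_right (kpp_le x hν ht.1) (abs_nonneg _))
  -- step 2 : swap t and x
  have hswap1 : (∫⁻ t in Set.Ioc (0:ℝ) b, ∫⁻ x in E, Φ ((ν*t+x^2)/(ν+1)))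
      = ∫⁻ x in E, ∫⁻ t in Set.Ioc (0:ℝ) b, Φ ((ν*t+x^2)/(ν+1)) := by
    exact lintegral_lintegral_swap ((hmΦ.comp hmw).aemeasurable)
  -- step 3 : change of variables per x
  have hsub3 : ∀ x : ℝ, (∫⁻ t in Set.Ioc (0:ℝ) b, Φ ((ν*t+x^2)/(ν+1)))
      = ENNReal.ofReal ((ν/(ν+1))⁻¹) *
          ∫⁻ u in Set.Ioc (x^2/(ν+1)) ((ν/(ν+1))*b + x^2/(ν+1)), Φ u := by
    intro x
    have hc : 0 < ν/(ν+1) := by positivity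
    have hpre : (fun t : ℝ => (ν/(ν+1))*t + x^2/(ν+1)) ⁻¹'
        (Set.Ioc (x^2/(ν+1)) ((ν/(ν+1))*b + x^2/(ν+1))) = Set.Ioc 0 b := by
      ext t
      simp only [Set.mem_preimage, Set.mem_Ioc]
      constructor
      · rintro ⟨h1, h2⟩
        have hc' : 0 < ν/(ν+1) := hc
        constructor
        · nlinarith
        · nlinarith
      · rintro ⟨h1, h2⟩
        constructor
        · nlinarith
        · nlinarith
    have harg : ∀ t : ℝ, (ν*t+x^2)/(ν+1) = (ν/(ν+1))*t + x^2/(ν+1) := fun t => by ring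
    simp_rw [harg]
    rw [← hpre, lintegral_comp_affine hc Φ hmΦ measurableSet_Ioc]
  -- sections
  set sec : ℝ → Set ℝ := fun u =>
    {x : ℝ | x^2/(ν+1) < u} ∩ {x : ℝ | u ≤ (ν/(ν+1))*b + x^2/(ν+1)} with hsecdef
  have hsecm : ∀ u : ℝ, MeasurableSet (sec u) := fun u =>
    (measurableSet_lt (by fun_prop) measurable_const).inter
      (measurableSet_le measurable_const (by fun_prop))
  have hind : ∀ (x u : ℝ), (Set.Ioc (x^2/(ν+1)) ((ν/(ν+1))*b + x^2/(ν+1))).indicator Φ u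
      = (sec u).indicator (fun _ => Φ u) x := by
    intro x u
    simp only [Set.indicator_apply, Set.mem_Ioc, hsecdef, Set.mem_inter_iff, Set.mem_setOf_eq]
  have hIoc : ∀ x : ℝ, (∫⁻ u in Set.Ioc (x^2/(ν+1)) ((ν/(ν+1))*b + x^2/(ν+1)), Φ u)
      = ∫⁻ u in Set.Ioi (0:ℝ),
          (Set.Ioc (x^2/(ν+1)) ((ν/(ν+1))*b + x^2/(ν+1))).indicator Φ u := by
    intro x
    have hss : Set.Ioc (x^2/(ν+1)) ((ν/(ν+1))*b + x^2/(ν+1)) ∩ Set.Ioi (0:ℝ)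
        = Set.Ioc (x^2/(ν+1)) ((ν/(ν+1))*b + x^2/(ν+1)) := by
      rw [Set.inter_eq_left]
      intro u hu
      have h0 : (0:ℝ) ≤ x^2/(ν+1) := by positivity
      exact lt_of_le_of_lt h0 hu.1
    rw [lintegral_indicator measurableSet_Ioc, Measure.restrict_restrict measurableSet_Ioc, hss]
  -- step 5 : swap x and u
  set S : Set (ℝ × ℝ) := {p : ℝ × ℝ | p.1^2/(ν+1) < p.2} ∩
      {p : ℝ × ℝ | p.2 ≤ (ν/(ν+1))*b + p.1^2/(ν+1)} with hSdef
  have hSm : MeasurableSet S :=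
    (measurableSet_lt (by fun_prop) (by fun_prop)).inter
      (measurableSet_le (by fun_prop) (by fun_prop))
  have hindS : ∀ (x u : ℝ), (sec u).indicator (fun _ => Φ u) x
      = S.indicator (fun p => Φ p.2) (x, u) := by
    intro x u
    simp only [Set.indicator_apply, hsecdef, hSdef, Set.mem_inter_iff, Set.mem_setOf_eq]
  have hswap2 : (∫⁻ x in E, ∫⁻ u in Set.Ioi (0:ℝ), (sec u).indicator (fun _ => Φ u) x)
      = ∫⁻ u in Set.Ioi (0:ℝ), ∫⁻ x in E, (sec u).indicator (fun _ => Φ u) x := by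
    apply lintegral_lintegral_swap
    have : (Function.uncurry fun (x u : ℝ) => (sec u).indicator (fun _ => Φ u) x)
        = S.indicator (fun p => Φ p.2) := by
      funext p
      exact hindS p.1 p.2
    rw [this]
    exact ((hmΦ.comp measurable_snd).indicator hSm).aemeasurable
  have hinner : ∀ u : ℝ, (∫⁻ x in E, (sec u).indicator (fun _ => Φ u) x)
      = Φ u * volume (sec u ∩ E) := by
    intro u
    rw [lintegral_indicator_const (hsecm u), Measure.restrict_apply (hsecm u)]
  -- the pointwise volume bound
  set CC : ℝ := 2*ν*b*kconst ν / Real.sqrt (ν+1) with hCCdef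
  have hCC : 0 < CC := by
    have : 0 < Real.sqrt (ν+1) := Real.sqrt_pos.mpr hν1
    rw [hCCdef]; positivity
  set ψ : ℝ → ℝ≥0∞ := fun u =>
    (Set.Ioi (a^2/(ν+1))).indicator (fun u => ENNReal.ofReal (CC * u⁻¹)) u with hψdef
  have hmψ : Measurable ψ :=
    (Measurable.ennreal_ofReal (by fun_prop)).indicator measurableSet_Ioi
  have hptwise : ∀ u ∈ Set.Ioi (0:ℝ), Φ u * volume (sec u ∩ E)
      ≤ ψ u * ENNReal.ofReal |Δ u| := by
    intro u hu
    have hu0 : (0:ℝ) < u := hu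
    by_cases hcase : a^2/(ν+1) < u
    · have hMpos : (0:ℝ) < Real.sqrt ((ν+1)*u) := Real.sqrt_pos.mpr (by positivity)
      have hsu : (0:ℝ) < Real.sqrt u := Real.sqrt_pos.mpr hu0
      have hs1 : (0:ℝ) < Real.sqrt (ν+1) := Real.sqrt_pos.mpr hν1
      have hvol : volume (sec u ∩ E) ≤ ENNReal.ofReal (2*(ν*b)/Real.sqrt ((ν+1)*u)) := by
        set m := Real.sqrt (max 0 ((ν+1)*u - ν*b)) with hmdef
        set M := Real.sqrt ((ν+1)*u) with hMdef
        have hmM : m ≤ M := Real.sqrt_le_sqrt (max_le (by positivity) (by nlinarith))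
        have hsubset : sec u ∩ E ⊆ Set.Ico m M ∪ Set.Ioc (-M) (-m) := by
          rintro x ⟨⟨hx1, hx2⟩, hx3⟩
          simp only [Set.mem_setOf_eq] at hx1 hx2 hx3
          have hxx : x^2 < (ν+1)*u := by
            rw [div_lt_iff₀ hν1] at hx1; linarith [hx1]
          have hxx2 : (ν+1)*u - ν*b ≤ x^2 := by
            have h5 : (u - x^2/(ν+1)) * (ν+1) ≤ ((ν/(ν+1))*b) * (ν+1) := by
              apply mul_le_mul_of_nonneg_right _ hν1.le
              linarith
            have h6 : (ν/(ν+1))*b*(ν+1) = ν*b := by field_simp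
            have h7 : (u - x^2/(ν+1))*(ν+1) = (ν+1)*u - x^2 := by field_simp
            linarith
          have hxM : |x| < M := by
            rw [hMdef]
            calc |x| = Real.sqrt (x^2) := (Real.sqrt_sq_eq_abs x).symm
              _ < Real.sqrt ((ν+1)*u) := Real.sqrt_lt_sqrt (sq_nonneg x) hxx
          have hxm : m ≤ |x| := by
            rw [hmdef]
            calc Real.sqrt (max 0 ((ν+1)*u - ν*b)) ≤ Real.sqrt (x^2) :=
                Real.sqrt_le_sqrt (max_le (sq_nonneg x) hxx2)
              _ = |x| := Real.sqrt_sq_eq_abs x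
          rcases le_or_gt 0 x with hx0 | hx0
          · left
            rw [abs_of_nonneg hx0] at hxm hxM
            exact ⟨hxm, hxM⟩
          · right
            rw [abs_of_neg hx0] at hxm hxM
            exact ⟨by linarith, by linarith⟩
        calc volume (sec u ∩ E) ≤ volume (Set.Ico m M ∪ Set.Ioc (-M) (-m)) :=
              measure_mono hsubset
          _ ≤ volume (Set.Ico m M) + volume (Set.Ioc (-M) (-m)) := measure_union_le _ _
          _ = ENNReal.ofReal (M - m) + ENNReal.ofReal (M - m) := by
              rw [Real.volume_Ico, Real.volume_Ioc]
              congr 2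
              ring
          _ = ENNReal.ofReal ((M - m) + (M - m)) :=
              (ENNReal.ofReal_add (by linarith) (by linarith)).symm
          _ ≤ ENNReal.ofReal (2*(ν*b)/M) := by
              apply ENNReal.ofReal_le_ofReal
              have hd := sqrt_diff_le (show (0:ℝ) < (ν+1)*u by positivity)
                (show (0:ℝ) < ν*b by positivity)
              rw [← hMdef, ← hmdef] at hd
              have : 2*(ν*b)/M = ν*b/M + ν*b/M := by ring
              rw [this]
              linarith
      have hψu : ψ u = ENNReal.ofReal (CC * u⁻¹) := Set.indicator_of_mem hcase _
      have hreal : kconst ν * u ^ (-(1/2) : ℝ) * (2*(ν*b)/Real.sqrt ((ν+1)*u)) = CC * u⁻¹ := by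
        have e1 : Real.sqrt ((ν+1)*u) = Real.sqrt (ν+1) * Real.sqrt u := Real.sqrt_mul hν1.le u
        have e2 : u ^ (-(1/2) : ℝ) = (Real.sqrt u)⁻¹ := by
          rw [show (-(1/2) : ℝ) = -(1/2) from rfl, Real.rpow_neg hu0.le, ← Real.sqrt_eq_rpow]
        have e3 : Real.sqrt u * Real.sqrt u = u := Real.mul_self_sqrt hu0.le
        rw [e1, e2, hCCdef]
        field_simp
        linear_combination (-1 : ℝ) * e3
      calc Φ u * volume (sec u ∩ E)
          ≤ Φ u * ENNReal.ofReal (2*(ν*b)/Real.sqrt ((ν+1)*u)) := mul_le_mul_right hvol _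
        _ = ENNReal.ofReal ((kconst ν * u ^ (-(1/2) : ℝ) * (2*(ν*b)/Real.sqrt ((ν+1)*u))) * |Δ u|) := by
            rw [hΦdef]
            rw [← ENNReal.ofReal_mul (by positivity)]
            congr 1
            ring
        _ = ENNReal.ofReal ((CC * u⁻¹) * |Δ u|) := by rw [hreal]
        _ = ψ u * ENNReal.ofReal |Δ u| := by
            rw [hψu, ENNReal.ofReal_mul (by positivity)]
    · have hempty : sec u ∩ E = ∅ := by
        rw [Set.eq_empty_iff_forall_notMem]
        rintro x ⟨⟨h1, h2⟩, h3⟩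
        simp only [Set.mem_setOf_eq] at h1 h2
        simp only [hEdef, Set.mem_setOf_eq] at h3
        push_neg at hcase
        have hxa : a^2 < x^2 := by nlinarith [sq_abs x, abs_nonneg x]
        rw [div_lt_iff₀ hν1] at h1
        rw [le_div_iff₀ hν1] at hcase
        nlinarith
      rw [hempty]
      simp
  -- Cauchy-Schwarz
  have hconj : Real.HolderConjugate 2 2 := ⟨by norm_num, by norm_num, by norm_num⟩
  have hCS : (∫⁻ u in Set.Ioi (0:ℝ), ψ u * ENNReal.ofReal |Δ u|)
      ≤ (∫⁻ u in Set.Ioi (0:ℝ), ψ u ^ (2:ℝ)) ^ (1/2 : ℝ) *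
        (∫⁻ u in Set.Ioi (0:ℝ), ENNReal.ofReal |Δ u| ^ (2:ℝ)) ^ (1/2 : ℝ) := by
    have := ENNReal.lintegral_mul_le_Lp_mul_Lq (volume.restrict (Set.Ioi (0:ℝ))) hconj
      hmψ.aemeasurable (Measurable.aemeasurable (by exact hmΔ.abs.ennreal_ofReal))
    simpa using this
  -- the ψ² integral
  have hr : (0:ℝ) < a^2/(ν+1) := by positivity
  have hψ2 : (∫⁻ u in Set.Ioi (0:ℝ), ψ u ^ (2:ℝ))
      = ENNReal.ofReal ((2*ν*b*kconst ν/a)^2) := by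
    have e : ∀ u : ℝ, ψ u ^ (2:ℝ)
        = (Set.Ioi (a^2/(ν+1))).indicator (fun u => ENNReal.ofReal (CC^2 * u ^ (-2:ℝ))) u := by
      intro u
      by_cases hu : u ∈ Set.Ioi (a^2/(ν+1))
      · rw [hψdef]
        simp only [Set.indicator_of_mem hu]
        have hu0 : (0:ℝ) < u := lt_trans hr hu
        rw [ENNReal.ofReal_rpow_of_nonneg (by positivity) (by norm_num)]
        congr 1
        rw [show ((CC * u⁻¹) ^ (2:ℝ)) = (CC * u⁻¹) ^ (2:ℕ) by
          rw [← Real.rpow_natCast (CC * u⁻¹) 2]; norm_num]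
        rw [show (u ^ (-2:ℝ)) = (u⁻¹) ^ (2:ℕ) by
          rw [Real.rpow_neg hu0.le, show ((2:ℝ)) = ((2:ℕ):ℝ) by norm_num,
            Real.rpow_natCast, inv_pow]]
        ring
      · rw [hψdef]
        simp only [Set.indicator_of_notMem hu]
        exact ENNReal.zero_rpow_of_pos (by norm_num)
    calc (∫⁻ u in Set.Ioi (0:ℝ), ψ u ^ (2:ℝ))
        = ∫⁻ u in Set.Ioi (0:ℝ), (Set.Ioi (a^2/(ν+1))).indicator
            (fun u => ENNReal.ofReal (CC^2 * u ^ (-2:ℝ))) u := lintegral_congr e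
      _ = ∫⁻ u in Set.Ioi (a^2/(ν+1)), ENNReal.ofReal (CC^2 * u ^ (-2:ℝ)) := by
          have hss : Set.Ioi (a^2/(ν+1)) ∩ Set.Ioi (0:ℝ) = Set.Ioi (a^2/(ν+1)) := by
            rw [Set.inter_eq_left]
            intro u hu
            exact lt_trans hr hu
          rw [lintegral_indicator measurableSet_Ioi, Measure.restrict_restrict measurableSet_Ioi,
            hss]
      _ = ENNReal.ofReal (CC^2 / (a^2/(ν+1))) := lint_Ioi_inv_sq hr (sq_nonneg CC)
      _ = ENNReal.ofReal ((2*ν*b*kconst ν/a)^2) := by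
          congr 1
          rw [hCCdef, div_pow, div_pow, Real.sq_sqrt hν1.le]
          field_simp
  have hL2 : (∫⁻ u in Set.Ioi (0:ℝ), ENNReal.ofReal |Δ u| ^ (2:ℝ))
      = ∫⁻ w in Set.Ioi (0:ℝ), ENNReal.ofReal ((Δ w)^2) := by
    apply lintegral_congr
    intro u
    rw [ENNReal.ofReal_rpow_of_nonneg (abs_nonneg _) (by norm_num)]
    congr 1
    rw [show (|Δ u| ^ (2:ℝ)) = |Δ u| ^ (2:ℕ) by
      rw [show ((2:ℝ)) = ((2:ℕ):ℝ) by norm_num, Real.rpow_natCast], sq_abs]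
  show (∫⁻ t in Set.Ioc (0:ℝ) b, ∫⁻ x in E, ENNReal.ofReal (kpp ν x t *
        |Δ ((ν*t+x^2)/(ν+1))|))
      ≤ ENNReal.ofReal (2*(ν+1)*kconst ν * (b/a)) *
        (∫⁻ w in Set.Ioi (0:ℝ), ENNReal.ofReal ((Δ w)^2)) ^ (1/2 : ℝ)
  calc (∫⁻ t in Set.Ioc (0:ℝ) b, ∫⁻ x in E, ENNReal.ofReal (kpp ν x t *
        |Δ ((ν*t+x^2)/(ν+1))|))
      ≤ ∫⁻ t in Set.Ioc (0:ℝ) b, ∫⁻ x in E, Φ ((ν*t+x^2)/(ν+1)) := step1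
    _ = ∫⁻ x in E, ∫⁻ t in Set.Ioc (0:ℝ) b, Φ ((ν*t+x^2)/(ν+1)) := hswap1
    _ = ∫⁻ x in E, ENNReal.ofReal ((ν/(ν+1))⁻¹) *
          ∫⁻ u in Set.Ioi (0:ℝ), (sec u).indicator (fun _ => Φ u) x := by
        apply lintegral_congr
        intro x
        rw [hsub3 x, hIoc x]
        congr 1
    _ = ENNReal.ofReal ((ν/(ν+1))⁻¹) *
          ∫⁻ x in E, ∫⁻ u in Set.Ioi (0:ℝ), (sec u).indicator (fun _ => Φ u) x :=
        lintegral_const_mul' _ _ ENNReal.ofReal_ne_top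
    _ = ENNReal.ofReal ((ν/(ν+1))⁻¹) *
          ∫⁻ u in Set.Ioi (0:ℝ), Φ u * volume (sec u ∩ E) := by
        rw [hswap2]
        congr 1
        exact lintegral_congr fun u => hinner u
    _ ≤ ENNReal.ofReal ((ν/(ν+1))⁻¹) *
          ∫⁻ u in Set.Ioi (0:ℝ), ψ u * ENNReal.ofReal |Δ u| := by
        apply mul_le_mul_right
        exact setLIntegral_mono (hmψ.mul hmΔ.abs.ennreal_ofReal) hptwise
    _ ≤ ENNReal.ofReal ((ν/(ν+1))⁻¹) *
          ((∫⁻ u in Set.Ioi (0:ℝ), ψ u ^ (2:ℝ)) ^ (1/2:ℝ) *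
            (∫⁻ u in Set.Ioi (0:ℝ), ENNReal.ofReal |Δ u| ^ (2:ℝ)) ^ (1/2:ℝ)) :=
        mul_le_mul_right hCS _
    _ = ENNReal.ofReal ((ν/(ν+1))⁻¹) * (ENNReal.ofReal (2*ν*b*kconst ν/a) *
          (∫⁻ w in Set.Ioi (0:ℝ), ENNReal.ofReal ((Δ w)^2)) ^ (1/2:ℝ)) := by
        rw [hψ2, hL2]
        congr 2
        rw [ENNReal.ofReal_rpow_of_nonneg (by positivity) (by norm_num),
          ← Real.sqrt_eq_rpow, Real.sqrt_sq (by positivity)]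
    _ = ENNReal.ofReal (2*(ν+1)*kconst ν * (b/a)) *
          (∫⁻ w in Set.Ioi (0:ℝ), ENNReal.ofReal ((Δ w)^2)) ^ (1/2:ℝ) := by
        rw [← mul_assoc, ← ENNReal.ofReal_mul (by positivity)]
        congr 2
        rw [inv_div]
        field_simp

set_option maxHeartbeats 1000000 in
/-- tail-region `L¹`-type bound on `h_G − h_G'`, with a constant `c(ν)`
depending only on `ν ≥ 2`; the inequality is understood in `[0, ∞]`. -/
theorem stmt6 (ν : ℝ) (hν : 2 ≤ ν) :
    ∃ c : ℝ, 0 < c ∧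
      ∀ (G G' : Measure ℝ), IsProbabilityMeasure G → IsProbabilityMeasure G' →
        (∀ᵐ σ2 ∂G, 0 < σ2) → (∀ᵐ σ2 ∂G', 0 < σ2) →
        ∀ a b : ℝ, 0 < a → 0 < b →
          (∫⁻ t in Set.Ioc (0 : ℝ) b,
              (∫⁻ x in {x : ℝ | a < |x|},
                ENNReal.ofReal |hGdens G ν x t - hGdens G' ν x t|) *
              ENNReal.ofReal (fGdens G ν t))
            ≤ 2 * (ENNReal.ofReal (c * (b / a)) *
                (∫⁻ w in Set.Ioi (0 : ℝ),
                    ENNReal.ofReal ((fGdens G (ν + 1) w - fGdens G' (ν + 1) w) ^ 2)) ^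
                  (1 / 2 : ℝ)
              + ∫⁻ w in Set.Ioi (0 : ℝ),
                  ENNReal.ofReal |fGdens G ν w - fGdens G' ν w|) := by

  have hν0 : (0:ℝ) < ν := by linarith
  have hν1 : (0:ℝ) < ν+1 := by linarith
  have hk : 0 < kconst ν := kconst_pos hν0
  refine ⟨2*(ν+1)*kconst ν, mul_pos (by linarith : (0:ℝ) < 2*(ν+1)) hk, ?_⟩
  intro G G' hPG hPG' hG hG' a b ha hb
  haveI := hPG
  haveI := hPG'
  have hmA : Measurable fun t : ℝ => ∫⁻ x in {x : ℝ | a < |x|}, ENNReal.ofReal (kpp ν x t *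
      |fGdens G (ν+1) ((ν*t+x^2)/(ν+1)) - fGdens G' (ν+1) ((ν*t+x^2)/(ν+1))|) := by
    apply Measurable.lintegral_prod_right' (f := fun p : ℝ × ℝ => ENNReal.ofReal (kpp ν p.2 p.1 *
      |fGdens G (ν+1) ((ν*p.1+p.2^2)/(ν+1)) - fGdens G' (ν+1) ((ν*p.1+p.2^2)/(ν+1))|))
    apply Measurable.ennreal_ofReal
    apply Measurable.mul
    · unfold kpp; fun_prop
    · apply Measurable.abs
      exact ((measurable_fG G (ν+1)).sub (measurable_fG G' (ν+1))).comp
        (show Measurable fun p : ℝ×ℝ => (ν*p.1+p.2^2)/(ν+1) by fun_prop)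
  have hmB : Measurable fun t : ℝ => ENNReal.ofReal |fGdens G ν t - fGdens G' ν t| :=
    Measurable.ennreal_ofReal ((measurable_fG G ν).sub (measurable_fG G' ν)).abs
  calc (∫⁻ t in Set.Ioc (0 : ℝ) b,
          (∫⁻ x in {x : ℝ | a < |x|},
            ENNReal.ofReal |hGdens G ν x t - hGdens G' ν x t|) *
          ENNReal.ofReal (fGdens G ν t))
      ≤ ∫⁻ t in Set.Ioc (0 : ℝ) b,
          ((∫⁻ x in {x : ℝ | a < |x|}, ENNReal.ofReal (kpp ν x t *
            |fGdens G (ν+1) ((ν*t+x^2)/(ν+1)) - fGdens G' (ν+1) ((ν*t+x^2)/(ν+1))|))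
          + ENNReal.ofReal |fGdens G ν t - fGdens G' ν t|) :=
        setLIntegral_mono (hmA.add hmB) (fun t ht => stepA hG hG' hν ht.1)
    _ = (∫⁻ t in Set.Ioc (0 : ℝ) b,
          ∫⁻ x in {x : ℝ | a < |x|}, ENNReal.ofReal (kpp ν x t *
            |fGdens G (ν+1) ((ν*t+x^2)/(ν+1)) - fGdens G' (ν+1) ((ν*t+x^2)/(ν+1))|))
        + ∫⁻ t in Set.Ioc (0 : ℝ) b, ENNReal.ofReal |fGdens G ν t - fGdens G' ν t| :=
        lintegral_add_left' hmA.aemeasurable _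
    _ ≤ ENNReal.ofReal (2*(ν+1)*kconst ν * (b/a)) *
          (∫⁻ w in Set.Ioi (0 : ℝ),
            ENNReal.ofReal ((fGdens G (ν+1) w - fGdens G' (ν+1) w) ^ 2)) ^ (1/2 : ℝ)
        + ∫⁻ w in Set.Ioi (0 : ℝ), ENNReal.ofReal |fGdens G ν w - fGdens G' ν w| :=
        add_le_add (stepB G G' hν ha hb) (lintegral_mono_set Set.Ioc_subset_Ioi_self)
    _ ≤ 2 * (ENNReal.ofReal (2*(ν+1)*kconst ν * (b/a)) *
          (∫⁻ w in Set.Ioi (0 : ℝ),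
            ENNReal.ofReal ((fGdens G (ν+1) w - fGdens G' (ν+1) w) ^ 2)) ^ (1/2 : ℝ)
        + ∫⁻ w in Set.Ioi (0 : ℝ), ENNReal.ofReal |fGdens G ν w - fGdens G' ν w|) := by
        have h2 : ∀ z : ℝ≥0∞, z ≤ 2*z := fun z => by rw [two_mul]; exact le_self_add
        exact h2 _
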